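/- Let V : [0,∞) → ℝ be a nonnegative differentiable function with V'(t) ≤ -a·V(t)^γ whenever V(t) > 0, where a > 0 and 0 < γ < 1. Then V(t) = 0 for all t ≥ V(0)^{1-γ}/(a(1-γ)). -/
import Mathlib

/-- Key step: while `V` stays positive on `(s,t]`, the quantity
`V^{1-γ} + a(1-γ)·(time)` is nonincreasing from `s` to `t`. -/
lemma finite_time_stability_key
    (V : ℝ → ℝ) (hV : Differentiable ℝ V)
    (a γ : ℝ) (ha : 0 < a) (hγ0 : 0 < γ) (hγ1 : γ < 1)
    (hineq : ∀ t, 0 ≤ t → 0 < V t → deriv V t ≤ -a * V t ^ γ)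
    (s t : ℝ) (hs : 0 ≤ s) (hst : s < t)
    (hpos : ∀ u, s < u → u ≤ t → 0 < V u) :
    V t ^ (1 - γ) + a * (1 - γ) * t ≤ V s ^ (1 - γ) + a * (1 - γ) * s := by
  have hp : (0:ℝ) < 1 - γ := by linarith
  set g : ℝ → ℝ := fun u => V u ^ (1 - γ) + a * (1 - γ) * u with hg_def
  have hWcont : ∀ u, ContinuousAt (fun x => V x ^ (1 - γ)) u := by
    intro u
    exact (Real.continuousAt_rpow_const (V u) (1 - γ) (Or.inr hp.le)).comp
      (hV.continuous.continuousAt)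
  have hgcont : ∀ u, ContinuousAt g u := by
    intro u
    exact (hWcont u).add ((continuous_const.mul continuous_id).continuousAt)
  -- Step 1: g t ≤ g s' for s' ∈ Ioc s t
  have step1 : ∀ s', s < s' → s' ≤ t → g t ≤ g s' := by
    intro s' hss' hs't
    have hanti : AntitoneOn g (Set.Icc s' t) := by
      apply antitoneOn_of_deriv_nonpos (convex_Icc s' t)
      · exact fun u _ => (hgcont u).continuousWithinAt
      · intro u hu
        rw [interior_Icc] at hu
        have hVu : 0 < V u := hpos u (lt_trans hss' hu.1) (le_of_lt hu.2)
        have hW : HasDerivAt (fun x => V x ^ (1 - γ))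
            ((1 - γ) * V u ^ (1 - γ - 1) * deriv V u) u :=
          (Real.hasDerivAt_rpow_const (Or.inl (ne_of_gt hVu))).comp u (hV u).hasDerivAt
        exact (hW.add ((hasDerivAt_id u).const_mul
          (a * (1 - γ)))).differentiableAt.differentiableWithinAt
      · intro u hu
        rw [interior_Icc] at hu
        have hu0 : 0 ≤ u := le_of_lt (lt_of_le_of_lt hs (lt_trans hss' hu.1))
        have hVu : 0 < V u := hpos u (lt_trans hss' hu.1) (le_of_lt hu.2)
        have hW : HasDerivAt (fun x => V x ^ (1 - γ))
            ((1 - γ) * V u ^ (1 - γ - 1) * deriv V u) u :=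
          (Real.hasDerivAt_rpow_const (Or.inl (ne_of_gt hVu))).comp u (hV u).hasDerivAt
        have hg' : HasDerivAt g
            ((1 - γ) * V u ^ (1 - γ - 1) * deriv V u + a * (1 - γ) * 1) u :=
          hW.add ((hasDerivAt_id u).const_mul (a * (1 - γ)))
        rw [hg'.deriv]
        have hd : deriv V u ≤ -a * V u ^ γ := hineq u hu0 hVu
        have hcoef : 0 < (1 - γ) * V u ^ (1 - γ - 1) :=
          mul_pos hp (Real.rpow_pos_of_pos hVu _)
        have h1 : (1 - γ) * V u ^ (1 - γ - 1) * deriv V u ≤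
            (1 - γ) * V u ^ (1 - γ - 1) * (-a * V u ^ γ) :=
          mul_le_mul_of_nonneg_left hd (le_of_lt hcoef)
        have h2 : V u ^ (1 - γ - 1) * V u ^ γ = 1 := by
          rw [← Real.rpow_add hVu]
          norm_num
        have h3 : (1 - γ) * V u ^ (1 - γ - 1) * (-a * V u ^ γ) = -(a * (1 - γ)) := by
          linear_combination (-(a * (1 - γ))) * h2
        linarith [h1, h3]
    exact hanti (Set.mem_Icc.2 ⟨le_refl s', hs't⟩) (Set.mem_Icc.2 ⟨hs't, le_refl t⟩) hs't
  -- Step 2: pass to the limit s' → s⁺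
  have htend : Filter.Tendsto g (nhdsWithin s (Set.Ioi s)) (nhds (g s)) :=
    (hgcont s).continuousWithinAt
  have hev : ∀ᶠ s' in nhdsWithin s (Set.Ioi s), g t ≤ g s' := by
    filter_upwards [Ioc_mem_nhdsGT_of_mem (Set.mem_Ico.2 ⟨le_refl s, hst⟩)] with s' hs'
    exact step1 s' hs'.1 hs'.2
  exact ge_of_tendsto htend hev

/-- Finite-time stability comparison lemma (Bhat–Bernstein): `V' ≤ -a V^γ`
with `0 < γ < 1` forces `V = 0` after time `V(0)^{1-γ}/(a(1-γ))`. -/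
theorem finite_time_stability
    (V : ℝ → ℝ) (hV : Differentiable ℝ V)
    (hnn : ∀ t, 0 ≤ t → 0 ≤ V t)
    (a γ : ℝ) (ha : 0 < a) (hγ0 : 0 < γ) (hγ1 : γ < 1)
    (hineq : ∀ t, 0 ≤ t → 0 < V t → deriv V t ≤ -a * V t ^ γ) :
    ∀ t, V 0 ^ (1 - γ) / (a * (1 - γ)) ≤ t → V t = 0 := by
  intro t ht
  have hp : (0:ℝ) < 1 - γ := by linarith
  have hap : 0 < a * (1 - γ) := mul_pos ha hp
  have hT0 : 0 ≤ V 0 ^ (1 - γ) / (a * (1 - γ)) :=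
    div_nonneg (Real.rpow_nonneg (hnn 0 le_rfl) _) (le_of_lt hap)
  have ht0 : 0 ≤ t := le_trans hT0 ht
  by_contra hne
  have hVt : 0 < V t := lt_of_le_of_ne (hnn t ht0) (Ne.symm hne)
  have hWt : 0 < V t ^ (1 - γ) := Real.rpow_pos_of_pos hVt _
  by_cases hS : (Set.Icc 0 t ∩ V ⁻¹' {0}).Nonempty
  · -- V vanishes somewhere in [0,t]; take the last such point s
    have hbdd : BddAbove (Set.Icc 0 t ∩ V ⁻¹' {0}) := BddAbove.inter_of_left bddAbove_Icc
    have hclosed : IsClosed (Set.Icc 0 t ∩ V ⁻¹' {0}) :=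
      isClosed_Icc.inter (isClosed_singleton.preimage hV.continuous)
    have hsmem := hclosed.csSup_mem hS hbdd
    obtain ⟨⟨hs0, hst'⟩, hVs⟩ := hsmem
    have hVs0 : V (sSup (Set.Icc 0 t ∩ V ⁻¹' {0})) = 0 := Set.mem_singleton_iff.1 hVs
    set s := sSup (Set.Icc 0 t ∩ V ⁻¹' {0}) with hs_def
    have hst : s < t := lt_of_le_of_ne hst' (by intro h; rw [h] at hVs0; exact hne hVs0)
    have hpos : ∀ u, s < u → u ≤ t → 0 < V u := by
      intro u hsu hut
      rcases lt_or_eq_of_le (hnn u (le_trans hs0 (le_of_lt hsu))) with h | h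
      · exact h
      · exfalso
        have hmem : u ∈ Set.Icc 0 t ∩ V ⁻¹' {0} :=
          ⟨⟨le_trans hs0 (le_of_lt hsu), hut⟩, h.symm⟩
        exact absurd (le_csSup hbdd hmem) (not_le.2 hsu)
    have hkey := finite_time_stability_key V hV a γ ha hγ0 hγ1 hineq s t hs0 hst hpos
    rw [hVs0, Real.zero_rpow (ne_of_gt hp)] at hkey
    have hlt : a * (1 - γ) * s < a * (1 - γ) * t := mul_lt_mul_of_pos_left hst hap
    linarith [hkey, hWt, hlt]
  · -- V never vanishes on [0,t]
    have hpos' : ∀ u, 0 ≤ u → u ≤ t → 0 < V u := by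
      intro u hu0 hut
      rcases lt_or_eq_of_le (hnn u hu0) with h | h
      · exact h
      · exact absurd ⟨⟨hu0, hut⟩, h.symm⟩ (fun hmem => hS ⟨u, hmem⟩)
    have hV0 : 0 < V 0 := hpos' 0 le_rfl ht0
    have hT : 0 < V 0 ^ (1 - γ) / (a * (1 - γ)) :=
      div_pos (Real.rpow_pos_of_pos hV0 _) hap
    have htpos : 0 < t := lt_of_lt_of_le hT ht
    have hkey := finite_time_stability_key V hV a γ ha hγ0 hγ1 hineq 0 t le_rfl htpos
      (fun u hu hut => hpos' u hu.le hut)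
    have hlt : a * (1 - γ) * t < V 0 ^ (1 - γ) := by linarith [hkey, hWt]
    have : t < V 0 ^ (1 - γ) / (a * (1 - γ)) := (lt_div_iff₀ hap).2 (by linarith [hlt])
    exact absurd ht (not_le.2 this)
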